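/- Let Λ be a row-finite strongly aperiodic k-graph with no sources. For every maximal tail χ of Λ there exists an infinite path x ∈ Λ^∞ with β(x) = χ, where β(x) = {v ∈ Λ^0 : vΛx(n,n) ≠ ∅ for some n ∈ ℕ^k}; that is, the map β : Λ^∞ → χ_Λ is surjective. -/

import Mathlib

set_option autoImplicit false

open scoped Classical

/-- A `k`-graph: a countable small category together with a degree functor
`d : Λ → ℕ^k` satisfying the unique factorization property.  Paths (morphisms)
form a single type; vertices (objects) are identified with the paths of
degree `0`. -/
structure KGraph (k : ℕ) where
  /-- the type of paths (morphisms) of the `k`-graph -/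
  Path : Type
  countable : Countable Path
  nonempty : Nonempty Path
  /-- the range (codomain) vertex of a path -/
  r : Path → Path
  /-- the source (domain) vertex of a path -/
  s : Path → Path
  /-- composition: `comp lam mu` is the path `λμ`, meaningful when `s lam = r mu` -/
  comp : Path → Path → Path
  /-- the degree functor -/
  d : Path → Fin k → ℕ
  d_r : ∀ lam, d (r lam) = 0
  d_s : ∀ lam, d (s lam) = 0
  r_r : ∀ lam, r (r lam) = r lam
  s_r : ∀ lam, s (r lam) = r lam
  r_s : ∀ lam, r (s lam) = s lam
  s_s : ∀ lam, s (s lam) = s lam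
  id_comp : ∀ lam, comp (r lam) lam = lam
  comp_id : ∀ lam, comp lam (s lam) = lam
  r_comp : ∀ lam mu, s lam = r mu → r (comp lam mu) = r lam
  s_comp : ∀ lam mu, s lam = r mu → s (comp lam mu) = s mu
  d_comp : ∀ lam mu, s lam = r mu → d (comp lam mu) = d lam + d mu
  comp_assoc : ∀ lam mu nu, s lam = r mu → s mu = r nu →
    comp (comp lam mu) nu = comp lam (comp mu nu)
  /-- the unique factorization property -/
  factor : ∀ lam (m n : Fin k → ℕ), d lam = m + n →
    ∃! p : Path × Path, s p.1 = r p.2 ∧ comp p.1 p.2 = lam ∧ d p.1 = m ∧ d p.2 = n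

namespace KGraph

variable {k : ℕ}

/-- `v` is a vertex, i.e. an element of `Λ⁰`. -/
def IsVertex (Λ : KGraph k) (v : Λ.Path) : Prop := Λ.d v = 0

/-- `v ≤ w`, i.e. `vΛw ≠ ∅`. -/
def Conn (Λ : KGraph k) (v w : Λ.Path) : Prop := ∃ lam, Λ.r lam = v ∧ Λ.s lam = w

/-- the canonical generator `e i` of `ℕ^k`. -/
def eVec (k : ℕ) (i : Fin k) : Fin k → ℕ := Pi.single i 1

/-- `Λ` is row-finite: `vΛⁿ` is finite for every vertex `v` and `n ∈ ℕ^k`. -/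
def RowFinite (Λ : KGraph k) : Prop :=
  ∀ v, Λ.IsVertex v → ∀ n : Fin k → ℕ, {lam | Λ.r lam = v ∧ Λ.d lam = n}.Finite

/-- `Λ` has no sources: `vΛ^{e i} ≠ ∅` for every vertex `v` and `i`. -/
def NoSources (Λ : KGraph k) : Prop :=
  ∀ v, Λ.IsVertex v → ∀ i : Fin k, ∃ lam, Λ.r lam = v ∧ Λ.d lam = eVec k i

/-- the middle factor `λ(m,n)`: the unique `σ` such that `λ = μστ` with
`d μ = m`, `d σ = n - m`, `d τ = d λ - n` (junk value if no factorization exists). -/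
noncomputable def seg (Λ : KGraph k) (lam : Λ.Path) (m n : Fin k → ℕ) : Λ.Path :=
  if h : ∃ sig, ∃ mu tau, Λ.s mu = Λ.r sig ∧ Λ.s sig = Λ.r tau ∧
      Λ.comp (Λ.comp mu sig) tau = lam ∧ Λ.d mu = m ∧ Λ.d sig = n - m ∧
      Λ.d tau = Λ.d lam - n
  then h.choose else lam

/-- `Λ` has no local periodicity at the vertex `v`. -/
def NoLocalPeriodicity (Λ : KGraph k) (v : Λ.Path) : Prop :=
  ∀ m n : Fin k → ℕ, m ≠ n →
    ∃ lam, Λ.r lam = v ∧ m ⊔ n ≤ Λ.d lam ∧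
      Λ.seg lam m (m + Λ.d lam - (m ⊔ n)) ≠ Λ.seg lam n (n + Λ.d lam - (m ⊔ n))

/-- `Λ` is aperiodic: no vertex has local periodicity. -/
def Aperiodic (Λ : KGraph k) : Prop := ∀ v, Λ.IsVertex v → Λ.NoLocalPeriodicity v

/-- a hereditary set of vertices -/
def Hereditary (Λ : KGraph k) (H : Set Λ.Path) : Prop :=
  ∀ v ∈ H, ∀ w, Λ.Conn v w → w ∈ H

/-- a saturated set of vertices -/
def Saturated (Λ : KGraph k) (H : Set Λ.Path) : Prop :=
  ∀ v, Λ.IsVertex v → (∃ mu, Λ.r mu = v) →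
    (∃ i : Fin k, ∀ lam, Λ.r lam = v → Λ.d lam = eVec k i → Λ.s lam ∈ H) → v ∈ H

/-- the saturation of a set of vertices: the smallest saturated set containing it -/
def saturation (Λ : KGraph k) (H : Set Λ.Path) : Set Λ.Path :=
  ⋂₀ {K : Set Λ.Path | H ⊆ K ∧ Λ.Saturated K}

/-- no local periodicity at the vertex `v` of the quotient graph `Γ(Λ \ H)`
(whose paths are the paths of `Λ` with source outside `H`). -/
def QuotNoLocalPeriodicity (Λ : KGraph k) (H : Set Λ.Path) (v : Λ.Path) : Prop :=
  ∀ m n : Fin k → ℕ, m ≠ n →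
    ∃ lam, Λ.r lam = v ∧ Λ.s lam ∉ H ∧ m ⊔ n ≤ Λ.d lam ∧
      Λ.seg lam m (m + Λ.d lam - (m ⊔ n)) ≠ Λ.seg lam n (n + Λ.d lam - (m ⊔ n))

/-- `Λ` is strongly aperiodic: `Γ(Λ \ H)` is aperiodic for every saturated
hereditary proper subset `H ⊊ Λ⁰`. -/
def StronglyAperiodic (Λ : KGraph k) : Prop :=
  ∀ H : Set Λ.Path, (∀ v ∈ H, Λ.IsVertex v) → Λ.Hereditary H → Λ.Saturated H →
    H ≠ {v | Λ.IsVertex v} →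
    ∀ v, Λ.IsVertex v → v ∉ H → Λ.QuotNoLocalPeriodicity H v

/-- a maximal tail -/
def MaximalTail (Λ : KGraph k) (γ : Set Λ.Path) : Prop :=
  γ.Nonempty ∧ (∀ v ∈ γ, Λ.IsVertex v) ∧
  (∀ v₁ ∈ γ, ∀ v₂ ∈ γ, ∃ w ∈ γ, Λ.Conn v₁ w ∧ Λ.Conn v₂ w) ∧
  (∀ v ∈ γ, ∀ i : Fin k, ∃ f, Λ.r f = v ∧ Λ.d f = eVec k i ∧ Λ.s f ∈ γ) ∧
  (∀ v, Λ.IsVertex v → ∀ w ∈ γ, Λ.Conn v w → v ∈ γ)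

end KGraph

namespace KGraph

variable {k : ℕ}

/-- An infinite path in `Λ`: a degree-preserving functor `x : Ω_k → Λ`,
recorded by its values `x(m,n)` for `m ≤ n` in `ℕ^k`. -/
structure InfinitePath (Λ : KGraph k) where
  toFun : (Fin k → ℕ) → (Fin k → ℕ) → Λ.Path
  d_eq : ∀ m n : Fin k → ℕ, m ≤ n → Λ.d (toFun m n) = n - m
  r_eq : ∀ m n : Fin k → ℕ, m ≤ n → Λ.r (toFun m n) = toFun m m
  s_eq : ∀ m n : Fin k → ℕ, m ≤ n → Λ.s (toFun m n) = toFun n n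
  comp_eq : ∀ m n p : Fin k → ℕ, m ≤ n → n ≤ p →
    Λ.comp (toFun m n) (toFun n p) = toFun m p

/-- `β(x) = {v ∈ Λ⁰ : vΛx(n,n) ≠ ∅ for some n ∈ ℕ^k}`. -/
def tailOf (Λ : KGraph k) (x : Λ.InfinitePath) : Set Λ.Path :=
  {v | Λ.IsVertex v ∧ ∃ n : Fin k → ℕ, Λ.Conn v (x.toFun n n)}

/-- the cylinder set `Z(μ) = {x ∈ Λ^∞ : x(0, d(μ)) = μ}`. -/
def cyl (Λ : KGraph k) (mu : Λ.Path) : Set Λ.InfinitePath :=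
  {x | x.toFun 0 (Λ.d mu) = mu}

/-- the topology on `Λ^∞` generated by the cylinder sets -/
instance instTopInfinitePath (Λ : KGraph k) : TopologicalSpace Λ.InfinitePath :=
  TopologicalSpace.generateFrom {U | ∃ mu : Λ.Path, U = Λ.cyl mu}

/-- `χ_Λ`, the set of maximal tails of `Λ` -/
def MaxTail (Λ : KGraph k) : Type := {γ : Set Λ.Path // Λ.MaximalTail γ}

/-- `S(v) = {χ ∈ χ_Λ : v ∈ χ}`. -/
def Sv (Λ : KGraph k) (v : Λ.Path) : Set Λ.MaxTail := {χ | v ∈ χ.1}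

/-- the topology on `χ_Λ` generated by the sets `S(v)`, `v ∈ Λ⁰` -/
instance instTopMaxTail (Λ : KGraph k) : TopologicalSpace Λ.MaxTail :=
  TopologicalSpace.generateFrom {U | ∃ v, Λ.IsVertex v ∧ U = Λ.Sv v}

end KGraph

namespace KGraph

variable {k : ℕ} {Λ : KGraph k}

lemma aux_vertex_rs {v : Λ.Path} (hv : Λ.IsVertex v) : Λ.r v = v ∧ Λ.s v = v := by
  have h0 : Λ.d v = 0 + 0 := by simpa using (show Λ.d v = 0 from hv)
  have hu := Λ.factor v 0 0 h0
  have h1 : Λ.s (Λ.r v) = Λ.r v ∧ Λ.comp (Λ.r v) v = v ∧ Λ.d (Λ.r v) = 0 ∧ Λ.d v = 0 :=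
    ⟨Λ.s_r v, Λ.id_comp v, Λ.d_r v, hv⟩
  have h2 : Λ.s v = Λ.r (Λ.s v) ∧ Λ.comp v (Λ.s v) = v ∧ Λ.d v = 0 ∧ Λ.d (Λ.s v) = 0 :=
    ⟨(Λ.r_s v).symm, Λ.comp_id v, hv, Λ.d_s v⟩
  have heq : ((Λ.r v, v) : Λ.Path × Λ.Path) = (v, Λ.s v) := hu.unique h1 h2
  exact ⟨congrArg Prod.fst heq, (congrArg Prod.snd heq).symm⟩

/-- split a path into a prefix of degree `m` and the remaining suffix -/
noncomputable def split (Λ : KGraph k) (lam : Λ.Path) (m : Fin k → ℕ) : Λ.Path × Λ.Path :=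
  if h : Λ.d lam = m + (Λ.d lam - m) then (Λ.factor lam m (Λ.d lam - m) h).exists.choose
  else (lam, lam)

lemma aux_cond {lam : Λ.Path} {m : Fin k → ℕ} (h : m ≤ Λ.d lam) :
    Λ.d lam = m + (Λ.d lam - m) := by
  funext i
  have h2 : m i ≤ Λ.d lam i := h i
  simp only [Pi.add_apply, Pi.sub_apply]
  omega

lemma split_spec {lam : Λ.Path} {m : Fin k → ℕ} (h : m ≤ Λ.d lam) :
    Λ.s (Λ.split lam m).1 = Λ.r (Λ.split lam m).2 ∧
    Λ.comp (Λ.split lam m).1 (Λ.split lam m).2 = lam ∧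
    Λ.d (Λ.split lam m).1 = m ∧ Λ.d (Λ.split lam m).2 = Λ.d lam - m := by
  simp only [split, dif_pos (aux_cond h)]
  exact (Λ.factor lam m (Λ.d lam - m) (aux_cond h)).exists.choose_spec

lemma split_eq {a b lam : Λ.Path} {m : Fin k → ℕ} (hab : Λ.s a = Λ.r b)
    (hc : Λ.comp a b = lam) (hda : Λ.d a = m) : Λ.split lam m = (a, b) := by
  have hd : Λ.d lam = m + Λ.d b := by rw [← hc, Λ.d_comp a b hab, hda]
  have hle : m ≤ Λ.d lam := by rw [hd]; exact le_self_add
  have hdb : Λ.d b = Λ.d lam - m := by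
    rw [hd]; funext i; simp only [Pi.add_apply, Pi.sub_apply]; omega
  have hu := Λ.factor lam m (Λ.d lam - m) (aux_cond hle)
  have h1 := split_spec hle
  exact hu.unique ⟨h1.1, h1.2.1, h1.2.2.1, h1.2.2.2⟩ ⟨hab, hc, hda, hdb⟩

/-- the middle segment `λ(m,n)` -/
noncomputable def mid (Λ : KGraph k) (lam : Λ.Path) (m n : Fin k → ℕ) : Λ.Path :=
  (Λ.split (Λ.split lam n).1 m).2

lemma split_split {lam : Λ.Path} {m n : Fin k → ℕ} (hm : m ≤ n) (hn : n ≤ Λ.d lam) :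
    Λ.split lam m = ((Λ.split (Λ.split lam n).1 m).1,
      Λ.comp (Λ.mid lam m n) (Λ.split lam n).2) := by
  obtain ⟨hab, hc, hda, hdb⟩ := split_spec hn
  have hm' : m ≤ Λ.d (Λ.split lam n).1 := hm.trans_eq hda.symm
  obtain ⟨hce, hc2, hdc, hde⟩ := split_spec hm'
  have hse : Λ.s (Λ.split (Λ.split lam n).1 m).2 = Λ.r (Λ.split lam n).2 := by
    rw [← hab, ← Λ.s_comp _ _ hce, hc2]
  have hassoc : Λ.comp (Λ.split (Λ.split lam n).1 m).1
      (Λ.comp (Λ.split (Λ.split lam n).1 m).2 (Λ.split lam n).2) = lam := by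
    rw [← Λ.comp_assoc _ _ _ hce hse, hc2, hc]
  have hsc : Λ.s (Λ.split (Λ.split lam n).1 m).1 =
      Λ.r (Λ.comp (Λ.split (Λ.split lam n).1 m).2 (Λ.split lam n).2) := by
    rw [Λ.r_comp _ _ hse]; exact hce
  exact split_eq hsc hassoc hdc

lemma d_mid {lam : Λ.Path} {m n : Fin k → ℕ} (hm : m ≤ n) (hn : n ≤ Λ.d lam) :
    Λ.d (Λ.mid lam m n) = n - m := by
  have hda := (split_spec hn).2.2.1
  have hm' : m ≤ Λ.d (Λ.split lam n).1 := hm.trans_eq hda.symm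
  have h := (split_spec hm').2.2.2
  rw [mid, h, hda]

lemma mid_self {lam : Λ.Path} {n : Fin k → ℕ} (hn : n ≤ Λ.d lam) :
    Λ.mid lam n n = Λ.s (Λ.split lam n).1 := by
  have hda := (split_spec hn).2.2.1
  have h : Λ.split (Λ.split lam n).1 n = ((Λ.split lam n).1, Λ.s (Λ.split lam n).1) :=
    split_eq (Λ.r_s _).symm (Λ.comp_id _) hda
  rw [mid, h]

lemma mid_d_self {lam : Λ.Path} : Λ.mid lam (Λ.d lam) (Λ.d lam) = Λ.s lam := by
  rw [mid_self le_rfl]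
  have h : Λ.split lam (Λ.d lam) = (lam, Λ.s lam) :=
    split_eq (Λ.r_s lam).symm (Λ.comp_id lam) rfl
  rw [h]

lemma r_mid {lam : Λ.Path} {m n : Fin k → ℕ} (hm : m ≤ n) (hn : n ≤ Λ.d lam) :
    Λ.r (Λ.mid lam m n) = Λ.mid lam m m := by
  have hda := (split_spec hn).2.2.1
  have hm' : m ≤ Λ.d (Λ.split lam n).1 := hm.trans_eq hda.symm
  have h1 := (split_spec hm').1
  rw [mid, ← h1, mid_self (hm.trans hn),
    show (Λ.split lam m).1 = _ from congrArg Prod.fst (split_split hm hn)]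

lemma s_mid {lam : Λ.Path} {m n : Fin k → ℕ} (hm : m ≤ n) (hn : n ≤ Λ.d lam) :
    Λ.s (Λ.mid lam m n) = Λ.mid lam n n := by
  have hda := (split_spec hn).2.2.1
  have hm' : m ≤ Λ.d (Λ.split lam n).1 := hm.trans_eq hda.symm
  obtain ⟨hce, hc2, -, -⟩ := split_spec hm'
  rw [mid, mid_self hn, ← Λ.s_comp _ _ hce, hc2]

lemma comp_mid {lam : Λ.Path} {m n p : Fin k → ℕ} (hm : m ≤ n) (hn : n ≤ p)
    (hp : p ≤ Λ.d lam) :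
    Λ.comp (Λ.mid lam m n) (Λ.mid lam n p) = Λ.mid lam m p := by
  have hdA := (split_spec hp).2.2.1
  have hn' : n ≤ Λ.d (Λ.split lam p).1 := hn.trans_eq hdA.symm
  have h1 := congrArg Prod.snd (split_split hm hn')
  have h2 : (Λ.split (Λ.split lam p).1 n).1 = (Λ.split lam n).1 := by
    have h3 := congrArg Prod.fst (split_split hn hp)
    exact h3.symm
  have h3 : Λ.mid (Λ.split lam p).1 m n = Λ.mid lam m n := by rw [mid, mid, h2]
  show Λ.comp (Λ.mid lam m n) ((Λ.split (Λ.split lam p).1 n).2) =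
    (Λ.split (Λ.split lam p).1 m).2
  rw [h1, h3]

lemma mid_comp_left {a b : Λ.Path} {m n : Fin k → ℕ} (hab : Λ.s a = Λ.r b)
    (hm : m ≤ n) (hn : n ≤ Λ.d a) : Λ.mid (Λ.comp a b) m n = Λ.mid a m n := by
  have hsp : Λ.split (Λ.comp a b) (Λ.d a) = (a, b) := split_eq hab rfl rfl
  have hda : Λ.d a ≤ Λ.d (Λ.comp a b) := by
    rw [Λ.d_comp a b hab]; exact le_self_add
  have h2 : (Λ.split (Λ.comp a b) n).1 = (Λ.split a n).1 := by
    have h := congrArg Prod.fst (split_split hn hda)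
    rw [hsp] at h
    exact h
  rw [mid, mid, h2]

lemma conn_mid_end {lam : Λ.Path} {n : Fin k → ℕ} (hn : n ≤ Λ.d lam) :
    Λ.Conn (Λ.mid lam n n) (Λ.s lam) := by
  obtain ⟨hab, hc, -, -⟩ := split_spec hn
  refine ⟨(Λ.split lam n).2, ?_, ?_⟩
  · rw [mid_self hn]; exact hab.symm
  · rw [← Λ.s_comp _ _ hab, hc]

lemma conn_trans {u v w : Λ.Path} (h1 : Λ.Conn u v) (h2 : Λ.Conn v w) : Λ.Conn u w := by
  obtain ⟨p, hp1, hp2⟩ := h1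
  obtain ⟨q, hq1, hq2⟩ := h2
  exact ⟨Λ.comp p q, by rw [Λ.r_comp p q (hp2.trans hq1.symm), hp1],
    by rw [Λ.s_comp p q (hp2.trans hq1.symm), hq2]⟩

lemma fatten {γ : Set Λ.Path} (hγ : Λ.MaximalTail γ) :
    ∀ (j : ℕ) (v : Λ.Path), v ∈ γ → ∃ ν, Λ.r ν = v ∧ Λ.s ν ∈ γ ∧
      ∀ i : Fin k, (i : ℕ) < j → 1 ≤ Λ.d ν i := by
  intro j
  induction j with
  | zero =>
    intro v hv
    exact ⟨v, (aux_vertex_rs (hγ.2.1 v hv)).1,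
      by rw [(aux_vertex_rs (hγ.2.1 v hv)).2]; exact hv, by omega⟩
  | succ j ih =>
    intro v hv
    obtain ⟨ν, hr, hs, hd⟩ := ih v hv
    by_cases hjk : j < k
    · obtain ⟨e, he1, he2, he3⟩ := hγ.2.2.2.1 (Λ.s ν) hs ⟨j, hjk⟩
      refine ⟨Λ.comp ν e, ?_, ?_, ?_⟩
      · rw [Λ.r_comp ν e he1.symm, hr]
      · rw [Λ.s_comp ν e he1.symm]; exact he3
      · intro i hi
        rw [Λ.d_comp ν e he1.symm, Pi.add_apply, he2]
        rcases Nat.lt_or_ge (i : ℕ) j with h | h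
        · exact le_add_right (hd i h)
        · have hij : i = ⟨j, hjk⟩ := Fin.ext (show (i : ℕ) = j by omega)
          have h1 : eVec k ⟨j, hjk⟩ i = 1 := by rw [hij]; simp [eVec]
          omega
    · exact ⟨ν, hr, hs, fun i _ => hd i (lt_of_lt_of_le i.isLt (not_lt.1 hjk))⟩

lemma step_ex {γ : Set Λ.Path} (hγ : Λ.MaximalTail γ) {v t : Λ.Path}
    (hv : v ∈ γ) (ht : t ∈ γ) :
    ∃ p, Λ.r p = v ∧ Λ.s p ∈ γ ∧ (∀ i, 1 ≤ Λ.d p i) ∧ Λ.Conn t (Λ.s p) := by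
  obtain ⟨w, hw, ⟨μ, hμ1, hμ2⟩, hconn⟩ := hγ.2.2.1 v hv t ht
  obtain ⟨ν, hν1, hν2, hν3⟩ := fatten hγ k w hw
  have hsr : Λ.s μ = Λ.r ν := by rw [hμ2, hν1]
  refine ⟨Λ.comp μ ν, by rw [Λ.r_comp _ _ hsr, hμ1],
    by rw [Λ.s_comp _ _ hsr]; exact hν2, ?_, ?_⟩
  · intro i
    rw [Λ.d_comp _ _ hsr, Pi.add_apply]
    exact le_add_left (hν3 i i.isLt)
  · rw [Λ.s_comp _ _ hsr]
    exact conn_trans hconn ⟨ν, hν1, rfl⟩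

/-- the sequence of path segments used to build the infinite path -/
noncomputable def seqP (Λ : KGraph k) (γ : Set Λ.Path) (hγ : Λ.MaximalTail γ)
    (f : ℕ → Λ.Path) (hf : ∀ j, f j ∈ γ) : ℕ → {p : Λ.Path // Λ.s p ∈ γ}
  | 0 => ⟨hγ.1.choose, by
      rw [(aux_vertex_rs (hγ.2.1 _ hγ.1.choose_spec)).2]; exact hγ.1.choose_spec⟩
  | j + 1 => ⟨(step_ex hγ (Λ.seqP γ hγ f hf j).2 (hf j)).choose,
      (step_ex hγ (Λ.seqP γ hγ f hf j).2 (hf j)).choose_spec.2.1⟩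

/-- the cumulative composite path -/
noncomputable def cumP (Λ : KGraph k) (γ : Set Λ.Path) (hγ : Λ.MaximalTail γ)
    (f : ℕ → Λ.Path) (hf : ∀ j, f j ∈ γ) : ℕ → Λ.Path
  | 0 => (Λ.seqP γ hγ f hf 0).1
  | j + 1 => Λ.comp (Λ.cumP γ hγ f hf j) (Λ.seqP γ hγ f hf (j + 1)).1

variable {γ : Set Λ.Path} {hγ : Λ.MaximalTail γ} {f : ℕ → Λ.Path} {hf : ∀ j, f j ∈ γ}

lemma seqP_succ (j : ℕ) : (Λ.seqP γ hγ f hf (j + 1)).1 =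
    (step_ex hγ (Λ.seqP γ hγ f hf j).2 (hf j)).choose := rfl

lemma seqP_succ_r (j : ℕ) :
    Λ.r (Λ.seqP γ hγ f hf (j + 1)).1 = Λ.s (Λ.seqP γ hγ f hf j).1 :=
  (step_ex hγ (Λ.seqP γ hγ f hf j).2 (hf j)).choose_spec.1

lemma seqP_succ_d (j : ℕ) : ∀ i, 1 ≤ Λ.d (Λ.seqP γ hγ f hf (j + 1)).1 i :=
  (step_ex hγ (Λ.seqP γ hγ f hf j).2 (hf j)).choose_spec.2.2.1

lemma seqP_succ_conn (j : ℕ) : Λ.Conn (f j) (Λ.s (Λ.seqP γ hγ f hf (j + 1)).1) :=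
  (step_ex hγ (Λ.seqP γ hγ f hf j).2 (hf j)).choose_spec.2.2.2

lemma s_cumP (j : ℕ) : Λ.s (Λ.cumP γ hγ f hf j) = Λ.s (Λ.seqP γ hγ f hf j).1 := by
  induction j with
  | zero => rfl
  | succ j ih =>
    show Λ.s (Λ.comp _ _) = _
    rw [Λ.s_comp _ _ (by rw [ih, seqP_succ_r])]

lemma s_cumP_mem (j : ℕ) : Λ.s (Λ.cumP γ hγ f hf j) ∈ γ := by
  rw [s_cumP]; exact (Λ.seqP γ hγ f hf j).2

lemma cumP_succ_sr (j : ℕ) :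
    Λ.s (Λ.cumP γ hγ f hf j) = Λ.r (Λ.seqP γ hγ f hf (j + 1)).1 := by
  rw [s_cumP, seqP_succ_r]

lemma d_cumP_ge (j : ℕ) : ∀ i, j ≤ Λ.d (Λ.cumP γ hγ f hf j) i := by
  induction j with
  | zero => intro i; omega
  | succ j ih =>
    intro i
    show j + 1 ≤ Λ.d (Λ.comp _ _) i
    rw [Λ.d_comp _ _ (cumP_succ_sr j), Pi.add_apply]
    have := seqP_succ_d (Λ := Λ) (γ := γ) (hγ := hγ) (f := f) (hf := hf) j i
    have := ih i
    omega

lemma d_cumP_mono {j j' : ℕ} (h : j ≤ j') :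
    Λ.d (Λ.cumP γ hγ f hf j) ≤ Λ.d (Λ.cumP γ hγ f hf j') := by
  induction j' with
  | zero => cases Nat.le_zero.1 h; exact le_rfl
  | succ j' ih =>
    rcases Nat.lt_or_ge j (j' + 1) with h' | h'
    · refine le_trans (ih (by omega)) ?_
      show Λ.d _ ≤ Λ.d (Λ.comp _ _)
      rw [Λ.d_comp _ _ (cumP_succ_sr j')]
      exact le_self_add
    · have : j = j' + 1 := by omega
      subst this; exact le_rfl

lemma mid_cumP {j j' : ℕ} (hj : j ≤ j') {m n : Fin k → ℕ} (hm : m ≤ n)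
    (hn : n ≤ Λ.d (Λ.cumP γ hγ f hf j)) :
    Λ.mid (Λ.cumP γ hγ f hf j') m n = Λ.mid (Λ.cumP γ hγ f hf j) m n := by
  induction j' with
  | zero => cases Nat.le_zero.1 hj; rfl
  | succ j' ih =>
    rcases Nat.lt_or_ge j (j' + 1) with h' | h'
    · have hj' : j ≤ j' := by omega
      rw [← ih hj']
      show Λ.mid (Λ.comp _ _) m n = _
      rw [mid_comp_left (cumP_succ_sr j') hm (hn.trans (d_cumP_mono hj'))]
    · have : j = j' + 1 := by omega
      subst this; rfl

end KGraph

/-- `β : Λ^∞ → χ_Λ` is surjective: every maximal tail is `β(x)` for some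
infinite path `x`. -/
theorem stmt14 {k : ℕ} (Λ : KGraph k) (hrf : Λ.RowFinite) (hns : Λ.NoSources)
    (hsa : Λ.StronglyAperiodic) :
    ∀ γ : Set Λ.Path, Λ.MaximalTail γ → ∃ x : Λ.InfinitePath, Λ.tailOf x = γ := by
  intro γ hγ
  haveI := Λ.countable
  obtain ⟨f, hfr⟩ := Set.Countable.exists_eq_range γ.to_countable hγ.1
  have hf : ∀ j, f j ∈ γ := fun j => hfr ▸ Set.mem_range_self j
  set C : ℕ → Λ.Path := Λ.cumP γ hγ f hf with hC
  set J : (Fin k → ℕ) → ℕ := fun n => Finset.univ.sup n with hJ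
  have hJle : ∀ n : Fin k → ℕ, n ≤ Λ.d (C (J n)) := by
    intro n i
    exact le_trans (Finset.le_sup (Finset.mem_univ i)) (KGraph.d_cumP_ge (J n) i)
  have mid2 : ∀ (a b : ℕ) (m n : Fin k → ℕ), m ≤ n → n ≤ Λ.d (C a) → n ≤ Λ.d (C b) →
      Λ.mid (C a) m n = Λ.mid (C b) m n := by
    intro a b m n hmn ha hb
    exact (KGraph.mid_cumP (le_max_left a b) hmn ha).symm.trans
      (KGraph.mid_cumP (le_max_right a b) hmn hb)
  refine ⟨⟨fun m n => if h : m ≤ n then Λ.mid (C (J n)) m n else C 0, ?_, ?_, ?_, ?_⟩, ?_⟩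
  · intro m n h
    rw [dif_pos h]
    exact KGraph.d_mid h (hJle n)
  · intro m n h
    rw [dif_pos h, dif_pos (le_refl m), KGraph.r_mid h (hJle n)]
    exact mid2 (J n) (J m) m m le_rfl (h.trans (hJle n)) (hJle m)
  · intro m n h
    rw [dif_pos h, dif_pos (le_refl n), KGraph.s_mid h (hJle n)]
  · intro m n p h1 h2
    rw [dif_pos h1, dif_pos h2, dif_pos (h1.trans h2),
      mid2 (J n) (J p) m n h1 (hJle n) (h2.trans (hJle p))]
    exact KGraph.comp_mid h1 h2 (hJle p)
  · ext v
    simp only [KGraph.tailOf, Set.mem_setOf_eq]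
    constructor
    · rintro ⟨hvert, n, hconn⟩
      rw [dif_pos (le_refl n)] at hconn
      have hvert2 : Λ.IsVertex (Λ.mid (C (J n)) n n) := by
        rw [KGraph.IsVertex, KGraph.d_mid (le_refl n) (hJle n)]
        simp
      have hmem : Λ.mid (C (J n)) n n ∈ γ :=
        hγ.2.2.2.2 _ hvert2 _ (KGraph.s_cumP_mem (J n)) (KGraph.conn_mid_end (hJle n))
      exact hγ.2.2.2.2 v hvert _ hmem hconn
    · intro hv
      obtain ⟨j, hj⟩ : ∃ j, f j = v := by rw [hfr] at hv; exact hv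
      have hconn : Λ.Conn v (Λ.s (C (j + 1))) := by
        rw [hC, KGraph.s_cumP, ← hj]
        exact KGraph.seqP_succ_conn j
      set n : Fin k → ℕ := Λ.d (C (j + 1)) with hn
      have hx : Λ.mid (C (J n)) n n = Λ.s (C (j + 1)) := by
        rw [mid2 (J n) (j + 1) n n le_rfl (hJle n) le_rfl, hn, KGraph.mid_d_self]
      refine ⟨hγ.2.1 v hv, n, ?_⟩
      rw [dif_pos (le_refl n), hx]
      exact hconn
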